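/- Let a finite DTMDP with uniformisation rate q > 0, time bound t ≥ 0, reward structure (c, f) and precision ε > 0 be given, and let k ∈ ℕ be ε-sufficient. Then the maximising value-iteration vector q'_0 satisfies, for every state s0, |q'_0(s0) − sup_{σ ∈ HR} V(σ, s0)| < ε. -/

import Mathlib

open scoped BigOperators

namespace TR

variable {S A : Type} [Fintype S] [Fintype A] [DecidableEq S] [DecidableEq A]

/-- Poisson probabilities `φ_λ(i) = λ^i/i! · e^{−λ}`. -/
noncomputable def phi (lam : ℝ) (i : ℕ) : ℝ :=
  lam ^ i / (Nat.factorial i : ℝ) * Real.exp (-lam)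

/-- `ψ_λ(i) = 1 − Σ_{j=0}^{i} φ_λ(j)`. -/
noncomputable def psi (lam : ℝ) (i : ℕ) : ℝ :=
  1 - ∑ j ∈ Finset.range (i + 1), phi lam j

/-- Action `a` is enabled in state `s`. -/
def Enabled (P : S → A → S → ℝ) (s : S) (a : A) : Prop :=
  ∑ s', P s a s' = 1

/-- `P` is the transition function of a finite DTMDP. -/
def IsDTMDP (P : S → A → S → ℝ) : Prop :=
  (∀ s a s', 0 ≤ P s a s') ∧
  (∀ s a, (∑ s', P s a s') = 0 ∨ (∑ s', P s a s') = 1) ∧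
  (∀ s, ∃ a, Enabled P s a)

/-- History-dependent randomised scheduler.  A history is encoded as a pair of
a list of (state, action) pairs (most recent first) and the current state. -/
def IsHR (P : S → A → S → ℝ) (sch : List (S × A) × S → A → ℝ) : Prop :=
  (∀ h a, 0 ≤ sch h a) ∧ (∀ h, ∑ a, sch h a = 1) ∧
  (∀ h a, 0 < sch h a → Enabled P h.2 a)

/-- Probability of the path recorded in the given history (of length `n`,
starting at `s0`) under the HR scheduler `sch`. -/
noncomputable def hrHistProb (P : S → A → S → ℝ) (sch : List (S × A) × S → A → ℝ)
    (s0 : S) : ℕ → List (S × A) × S → ℝ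
  | 0, h => if h.1 = [] ∧ h.2 = s0 then 1 else 0
  | _ + 1, ([], _) => 0
  | n + 1, ((s, a) :: rest, s') =>
      hrHistProb P sch s0 n (rest, s) * sch (rest, s) a * P s a s'

/-- Transient probability `tprob^σ(s0, n, s)`: total probability of all paths of
length `n` from `s0` ending in `s`. -/
noncomputable def hrProb (P : S → A → S → ℝ) (sch : List (S × A) × S → A → ℝ)
    (s0 : S) (n : ℕ) (s : S) : ℝ :=
  ∑' l : List (S × A), hrHistProb P sch s0 n (l, s)

/-- Counting randomised scheduler. -/
def IsCR (P : S → A → S → ℝ) (sch : S → ℕ → A → ℝ) : Prop :=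
  (∀ s n a, 0 ≤ sch s n a) ∧ (∀ s n, ∑ a, sch s n a = 1) ∧
  (∀ s n a, 0 < sch s n a → Enabled P s a)

/-- Transient distribution of a CR scheduler. -/
noncomputable def crProb (P : S → A → S → ℝ) (sch : S → ℕ → A → ℝ) (s0 : S) :
    ℕ → S → ℝ
  | 0 => fun s => if s = s0 then 1 else 0
  | n + 1 => fun s' => ∑ s, crProb P sch s0 n s * ∑ a, sch s n a * P s a s'

/-- Counting deterministic scheduler. -/
def IsCD (P : S → A → S → ℝ) (d : S → ℕ → A) : Prop :=
  ∀ s n, Enabled P s (d s n)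

/-- Transient distribution of a CD scheduler. -/
noncomputable def cdProb (P : S → A → S → ℝ) (d : S → ℕ → A) (s0 : S) :
    ℕ → S → ℝ
  | 0 => fun s => if s = s0 then 1 else 0
  | n + 1 => fun s' => ∑ s, cdProb P d s0 n s * P s (d s n) s'

/-- The value `V = Σ_i [ φ_{qt}(i)·Σ_s p_i(s)·f(s) + ψ_{qt}(i)·Σ_s p_i(s)·c(s)/q ]`
of transient distributions `p` w.r.t. uniformisation rate `q`, time bound `t`
and rewards `(c, f)`. -/
noncomputable def value (q t : ℝ) (c f : S → ℝ) (p : ℕ → S → ℝ) : ℝ :=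
  ∑' i : ℕ, (phi (q * t) i * ∑ s, p i s * f s
    + psi (q * t) i * ∑ s, p i s * (c s / q))

/-- Value-iteration vectors of a CR scheduler: `crVI … k j` is `q_{k+1-j}`,
i.e. `crVI … k 0 = q_{k+1} ≡ 0` and `crVI … k (k+1) = q_0`. -/
noncomputable def crVI (P : S → A → S → ℝ) (sch : S → ℕ → A → ℝ)
    (q t : ℝ) (c f : S → ℝ) (k : ℕ) : ℕ → S → ℝ
  | 0 => fun _ => 0
  | j + 1 => fun s =>
      (∑ a, sch s (k - j) a * ∑ s', P s a s' * crVI P sch q t c f k j s')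
      + phi (q * t) (k - j) * f s + psi (q * t) (k - j) * (c s / q)

/-- Maximising value-iteration vectors: `maxVI … k j` is `q'_{k+1-j}`,
i.e. `maxVI … k 0 = q'_{k+1} ≡ 0` and `maxVI … k (k+1) = q'_0`. -/
noncomputable def maxVI (P : S → A → S → ℝ)
    (q t : ℝ) (c f : S → ℝ) (k : ℕ) : ℕ → S → ℝ
  | 0 => fun _ => 0
  | j + 1 => fun s =>
      sSup {x : ℝ | ∃ a, Enabled P s a ∧
        x = ∑ s', P s a s' * maxVI P q t c f k j s'}
      + phi (q * t) (k - j) * f s + psi (q * t) (k - j) * (c s / q)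

/-- Maximum of a real-valued function on a finite nonempty type. -/
noncomputable def maxOf [Nonempty S] (g : S → ℝ) : ℝ :=
  Finset.univ.sup' Finset.univ_nonempty g

/-- `k` is `ε`-sufficient: `Σ_{n=0}^{k} ψ_{qt}(n) > qt − ε·q/(2·max_s c(s))`
(dropped if `max_s c(s) = 0`) and `ψ_{qt}(k)·max_s f(s) < ε/2`. -/
def EpsSufficient [Nonempty S] (q t : ℝ) (c f : S → ℝ) (ε : ℝ) (k : ℕ) : Prop :=
  (maxOf c = 0 ∨
    (∑ n ∈ Finset.range (k + 1), psi (q * t) n) > q * t - ε * q / (2 * maxOf c)) ∧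
  psi (q * t) k * maxOf f < ε / 2

/-- `n`-step transition probabilities (matrix powers) of a stochastic matrix. -/
noncomputable def matPow (P : S → S → ℝ) : ℕ → S → S → ℝ
  | 0 => fun s s' => if s = s' then 1 else 0
  | n + 1 => fun s s' => ∑ s'', matPow P n s s'' * P s'' s'

/-- `part` is a partition of the finite state set `S`. -/
def IsPartition (part : Finset (Finset S)) : Prop :=
  (∀ z ∈ part, z.Nonempty) ∧ (∀ s : S, ∃ z ∈ part, s ∈ z) ∧
  (∀ z ∈ part, ∀ z' ∈ part, z ≠ z' → Disjoint z z')

/-- Abstraction DTMDP of a stochastic matrix w.r.t. a partition: states are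
blocks, actions are concrete states, `P̄(z, s, z') = Σ_{s' ∈ z'} P(s,s')` if
`s ∈ z` and `0` otherwise. -/
noncomputable def abst (P : S → S → ℝ) (part : Finset (Finset S)) :
    {z // z ∈ part} → S → {z // z ∈ part} → ℝ :=
  fun z s z' => if s ∈ z.1 then ∑ s' ∈ z'.1, P s s' else 0


/-! ### Auxiliary lemmas -/

section PsiPhi

variable {lam : ℝ}

lemma phi_nonneg (h : 0 ≤ lam) (i : ℕ) : 0 ≤ phi lam i := by
  unfold phi
  positivity

lemma summable_phi (lam : ℝ) : Summable (phi lam) :=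
  (Real.summable_pow_div_factorial lam).mul_right _

lemma tsum_phi (lam : ℝ) : ∑' i, phi lam i = 1 := by
  unfold phi
  rw [tsum_mul_right]
  have h : ∑' i : ℕ, lam ^ i / (Nat.factorial i : ℝ) = Real.exp lam := by
    rw [Real.exp_eq_exp_ℝ, NormedSpace.exp_eq_tsum_div]
  rw [h, ← Real.exp_add]
  simp

lemma succ_mul_phi (i : ℕ) : ((i : ℝ) + 1) * phi lam (i + 1) = lam * phi lam i := by
  unfold phi
  have h : (Nat.factorial (i + 1) : ℝ) = ((i : ℝ) + 1) * Nat.factorial i := by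
    rw [Nat.factorial_succ]; push_cast; ring
  have h2 : (Nat.factorial i : ℝ) ≠ 0 := Nat.cast_ne_zero.2 (Nat.factorial_ne_zero i)
  have h3 : ((i : ℝ) + 1) ≠ 0 := by positivity
  field_simp [h]
  rw [h]; ring

lemma psi_eq_tsum (lam : ℝ) (i : ℕ) : psi lam i = ∑' n, phi lam (n + (i + 1)) := by
  have := Summable.sum_add_tsum_nat_add (i + 1) (summable_phi lam)
  unfold psi
  rw [tsum_phi lam] at this
  linarith [this]

lemma psi_nonneg (h : 0 ≤ lam) (i : ℕ) : 0 ≤ psi lam i := by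
  rw [psi_eq_tsum]
  exact tsum_nonneg fun n => phi_nonneg h _

lemma summable_psi_shift (lam : ℝ) (i : ℕ) : Summable fun n => phi lam (n + (i + 1)) :=
  (summable_nat_add_iff (i + 1)).2 (summable_phi lam)

lemma psi_succ (i : ℕ) : psi lam (i + 1) = psi lam i - phi lam (i + 1) := by
  unfold psi
  rw [Finset.sum_range_succ]
  ring

lemma succ_mul_psi_le (h : 0 ≤ lam) (N : ℕ) :
    ((N : ℝ) + 1) * psi lam (N + 1) ≤ lam * psi lam N := by
  have hkey : ∀ n : ℕ, ((N : ℝ) + 1) * phi lam (n + (N + 1 + 1)) ≤ lam * phi lam (n + (N + 1)) := by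
    intro n
    have h2 := succ_mul_phi (lam := lam) (n + (N + 1))
    have h3 : ((N : ℝ) + 1) ≤ ((n + (N + 1) : ℕ) : ℝ) + 1 := by
      push_cast; linarith [Nat.cast_nonneg (α := ℝ) n]
    calc ((N : ℝ) + 1) * phi lam (n + (N + 1 + 1))
        ≤ (((n + (N + 1) : ℕ) : ℝ) + 1) * phi lam (n + (N + 1) + 1) := by
          have he : n + (N + 1 + 1) = n + (N + 1) + 1 := by omega
          rw [he]
          exact mul_le_mul_of_nonneg_right h3 (phi_nonneg h _)
      _ = lam * phi lam (n + (N + 1)) := h2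
  have e1 : ((N : ℝ) + 1) * psi lam (N + 1) = ∑' n, ((N : ℝ) + 1) * phi lam (n + (N + 1 + 1)) := by
    rw [psi_eq_tsum lam (N + 1), tsum_mul_left]
  have e2 : lam * psi lam N = ∑' n, lam * phi lam (n + (N + 1)) := by
    rw [psi_eq_tsum lam N, tsum_mul_left]
  rw [e1, e2]
  exact Summable.tsum_le_tsum hkey ((summable_psi_shift lam (N + 1)).mul_left _)
    ((summable_psi_shift lam N).mul_left _)

lemma sum_psi_identity (N : ℕ) :
    ∑ i ∈ Finset.range (N + 1), psi lam i
      = lam * (1 - psi lam N) + ((N : ℝ) + 1) * psi lam (N + 1) := by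
  induction N with
  | zero =>
      have h1 : (1 : ℝ) * phi lam 1 = lam * phi lam 0 := by
        have := succ_mul_phi (lam := lam) 0; push_cast at this; linarith
      have hps0 : psi lam 0 = 1 - phi lam 0 := by unfold psi; simp
      have hps1 : psi lam 1 = psi lam 0 - phi lam 1 := psi_succ 0
      have hsum : ∑ i ∈ Finset.range (0 + 1), psi lam i = psi lam 0 := by simp
      rw [hsum]
      push_cast
      linear_combination lam * hps0 - hps1 + h1
  | succ n ih =>
      rw [Finset.sum_range_succ, ih]
      have h1 : ((n : ℝ) + 1 + 1) * phi lam (n + 2) = lam * phi lam (n + 1) := by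
        have := succ_mul_phi (lam := lam) (n + 1); push_cast at this; linarith
      have h2 : psi lam (n + 1) = psi lam n - phi lam (n + 1) := psi_succ n
      have h3 : psi lam (n + 2) = psi lam (n + 1) - phi lam (n + 2) := psi_succ (n + 1)
      push_cast
      linear_combination h1 + lam * h2 - ((n : ℝ) + 1 + 1) * h3

lemma sum_range_psi_le (h : 0 ≤ lam) (N : ℕ) :
    ∑ i ∈ Finset.range N, psi lam i ≤ lam := by
  cases N with
  | zero => simpa using h
  | succ n =>
      rw [sum_psi_identity]
      have := succ_mul_psi_le h n
      nlinarith [psi_nonneg h n]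

lemma summable_psi (h : 0 ≤ lam) : Summable (psi lam) :=
  summable_of_sum_range_le (psi_nonneg h) (sum_range_psi_le h)

lemma tsum_psi_le (h : 0 ≤ lam) : ∑' i, psi lam i ≤ lam :=
  Real.tsum_le_of_sum_range_le (psi_nonneg h) (sum_range_psi_le h)

end PsiPhi

section MDPAux

variable {S A : Type} [Fintype S] [Fintype A] [DecidableEq S] [DecidableEq A]

/-- The finset of histories (lists of state–action pairs) of a given length. -/
def histsLen (S A : Type) [Fintype S] [Fintype A] [DecidableEq S] [DecidableEq A] :
    ℕ → Finset (List (S × A))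
  | 0 => {[]}
  | n + 1 => (Finset.univ ×ˢ histsLen S A n).image fun p => p.1 :: p.2

lemma mem_histsLen (l : List (S × A)) (n : ℕ) :
    l ∈ histsLen S A n ↔ l.length = n := by
  induction n generalizing l with
  | zero => cases l <;> simp [histsLen]
  | succ n ih =>
      cases l with
      | nil => simp [histsLen]
      | cons x r =>
          simp only [histsLen, Finset.mem_image, Finset.mem_product, Finset.mem_univ, true_and,
            List.length_cons]
          constructor
          · rintro ⟨⟨y, m⟩, hp, hpe⟩
            simp only [List.cons.injEq] at hpe
            rw [← hpe.2, (ih m).1 hp]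
          · intro hlen
            exact ⟨(x, r), (ih r).2 (by omega), rfl⟩

lemma hrHistProb_nonneg (P : S → A → S → ℝ) (sch : List (S × A) × S → A → ℝ)
    (hP : ∀ s a s', 0 ≤ P s a s') (hs : ∀ h a, 0 ≤ sch h a) (s0 : S) :
    ∀ n (l : List (S × A)) (s : S), 0 ≤ hrHistProb P sch s0 n (l, s) := by
  intro n
  induction n with
  | zero =>
      intro l s
      simp only [hrHistProb]
      split <;> norm_num
  | succ n ih =>
      intro l s
      cases l with
      | nil => simp [hrHistProb]
      | cons x r =>
          obtain ⟨s1, a⟩ := x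
          simp only [hrHistProb]
          exact mul_nonneg (mul_nonneg (ih r s1) (hs _ _)) (hP _ _ _)

lemma hrHistProb_length (P : S → A → S → ℝ) (sch : List (S × A) × S → A → ℝ) (s0 : S) :
    ∀ n (l : List (S × A)) (s : S), hrHistProb P sch s0 n (l, s) ≠ 0 → l.length = n := by
  intro n
  induction n with
  | zero =>
      intro l s h
      simp only [hrHistProb] at h
      split at h
      · next hc => rw [hc.1]; rfl
      · exact absurd rfl h
  | succ n ih =>
      intro l s h
      cases l with
      | nil => simp [hrHistProb] at h
      | cons x r =>
          obtain ⟨s1, a⟩ := x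
          simp only [hrHistProb] at h
          have : hrHistProb P sch s0 n (r, s1) ≠ 0 := by
            intro h0
            apply h
            rw [h0]; ring
          simp only [List.length_cons, ih r s1 this]

lemma hrProb_eq_sum (P : S → A → S → ℝ) (sch : List (S × A) × S → A → ℝ)
    (s0 : S) (n : ℕ) (s : S) :
    hrProb P sch s0 n s = ∑ l ∈ histsLen S A n, hrHistProb P sch s0 n (l, s) := by
  apply tsum_eq_sum
  intro l hl
  by_contra h
  exact hl ((mem_histsLen l n).2 (hrHistProb_length P sch s0 n l s h))

lemma sum_hists_succ (P : S → A → S → ℝ) (sch : List (S × A) × S → A → ℝ) (s0 : S)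
    (n : ℕ) (g : List (S × A) × S → ℝ) :
    ∑ s' : S, ∑ l ∈ histsLen S A (n + 1), hrHistProb P sch s0 (n + 1) (l, s') * g (l, s')
    = ∑ s : S, ∑ l ∈ histsLen S A n, hrHistProb P sch s0 n (l, s) *
        ∑ a : A, sch (l, s) a * ∑ s' : S, P s a s' * g ((s, a) :: l, s') := by
  have himg : ∀ s' : S,
      ∑ l ∈ histsLen S A (n + 1), hrHistProb P sch s0 (n + 1) (l, s') * g (l, s')
      = ∑ s : S, ∑ a : A, ∑ l ∈ histsLen S A n,
          hrHistProb P sch s0 n (l, s) * (sch (l, s) a * (P s a s' * g ((s, a) :: l, s'))) := by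
    intro s'
    rw [show histsLen S A (n + 1)
        = (Finset.univ ×ˢ histsLen S A n).image (fun p => p.1 :: p.2) from rfl]
    rw [Finset.sum_image (by
      intro p _ q _ hpq
      simp only [List.cons.injEq] at hpq
      exact Prod.ext hpq.1 hpq.2)]
    rw [Finset.sum_product]
    rw [Fintype.sum_prod_type]
    refine Finset.sum_congr rfl fun s _ => Finset.sum_congr rfl fun a _ =>
      Finset.sum_congr rfl fun l _ => ?_
    show hrHistProb P sch s0 n (l, s) * sch (l, s) a * P s a s' * g ((s, a) :: l, s') = _
    ring
  calc ∑ s' : S, ∑ l ∈ histsLen S A (n + 1), hrHistProb P sch s0 (n + 1) (l, s') * g (l, s')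
      = ∑ s' : S, ∑ s : S, ∑ a : A, ∑ l ∈ histsLen S A n,
          hrHistProb P sch s0 n (l, s) * (sch (l, s) a * (P s a s' * g ((s, a) :: l, s'))) :=
        Finset.sum_congr rfl fun s' _ => himg s'
    _ = ∑ s : S, ∑ a : A, ∑ l ∈ histsLen S A n, ∑ s' : S,
          hrHistProb P sch s0 n (l, s) * (sch (l, s) a * (P s a s' * g ((s, a) :: l, s'))) := by
        rw [Finset.sum_comm]
        refine Finset.sum_congr rfl fun s _ => ?_
        rw [Finset.sum_comm]
        exact Finset.sum_congr rfl fun a _ => Finset.sum_comm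
    _ = ∑ s : S, ∑ l ∈ histsLen S A n, ∑ a : A, ∑ s' : S,
          hrHistProb P sch s0 n (l, s) * (sch (l, s) a * (P s a s' * g ((s, a) :: l, s'))) :=
        Finset.sum_congr rfl fun s _ => Finset.sum_comm
    _ = ∑ s : S, ∑ l ∈ histsLen S A n, hrHistProb P sch s0 n (l, s) *
          ∑ a : A, sch (l, s) a * ∑ s' : S, P s a s' * g ((s, a) :: l, s') := by
        simp only [Finset.mul_sum]

lemma sum_hrHistProb (P : S → A → S → ℝ) (hP : IsDTMDP P)
    (sch : List (S × A) × S → A → ℝ) (hs : IsHR P sch) (s0 : S) :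
    ∀ n, ∑ s : S, ∑ l ∈ histsLen S A n, hrHistProb P sch s0 n (l, s) = 1 := by
  intro n
  induction n with
  | zero =>
      rw [show histsLen S A 0 = {([] : List (S × A))} from rfl]
      simp only [Finset.sum_singleton]
      have : ∀ s : S, hrHistProb P sch s0 0 ([], s) = if s = s0 then 1 else 0 := by
        intro s
        show (if ([] : List (S × A)) = [] ∧ s = s0 then (1:ℝ) else 0) = _
        simp
      simp [this]
  | succ n ih =>
      have h1 : ∑ s : S, ∑ l ∈ histsLen S A (n + 1), hrHistProb P sch s0 (n + 1) (l, s)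
          = ∑ s : S, ∑ l ∈ histsLen S A (n + 1),
              hrHistProb P sch s0 (n + 1) (l, s) * (fun _ : List (S × A) × S => (1:ℝ)) (l, s) := by
        simp
      rw [h1, sum_hists_succ P sch s0 n (fun _ => (1:ℝ))]
      have h2 : ∀ (l : List (S × A)) (s : S),
          (∑ a : A, sch (l, s) a * ∑ s' : S, P s a s' * (1:ℝ)) = 1 := by
        intro l s
        have : ∀ a : A, sch (l, s) a * (∑ s' : S, P s a s' * (1:ℝ)) = sch (l, s) a := by
          intro a
          rcases eq_or_lt_of_le (hs.1 (l, s) a) with h | h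
          · rw [← h]; ring
          · have := hs.2.2 (l, s) a h
            unfold Enabled at this
            simp only [mul_one]
            rw [this, mul_one]
        rw [Finset.sum_congr rfl fun a _ => this a]
        exact hs.2.1 (l, s)
      calc ∑ s : S, ∑ l ∈ histsLen S A n, hrHistProb P sch s0 n (l, s) *
              ∑ a : A, sch (l, s) a * ∑ s' : S, P s a s' * (1:ℝ)
          = ∑ s : S, ∑ l ∈ histsLen S A n, hrHistProb P sch s0 n (l, s) :=
            Finset.sum_congr rfl fun s _ => Finset.sum_congr rfl fun l _ => by
              rw [h2 l s, mul_one]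
        _ = 1 := ih

/-- Value-to-go of an HR scheduler from a given history, for `j` remaining steps
of the truncated (length-`k+1`) value iteration. -/
noncomputable def Fval (P : S → A → S → ℝ) (sch : List (S × A) × S → A → ℝ)
    (q t : ℝ) (c f : S → ℝ) (k : ℕ) : ℕ → List (S × A) × S → ℝ
  | 0 => fun _ => 0
  | j + 1 => fun h =>
      (∑ a, sch h a * ∑ s', P h.2 a s' * Fval P sch q t c f k j ((h.2, a) :: h.1, s'))
      + phi (q * t) (k - j) * f h.2 + psi (q * t) (k - j) * (c h.2 / q)

lemma Fval_le_maxVI (P : S → A → S → ℝ) (hP : IsDTMDP P)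
    (sch : List (S × A) × S → A → ℝ) (hs : IsHR P sch) (q t : ℝ) (c f : S → ℝ) (k : ℕ) :
    ∀ j (h : List (S × A) × S), Fval P sch q t c f k j h ≤ maxVI P q t c f k j h.2 := by
  intro j
  induction j with
  | zero => intro h; simp [Fval, maxVI]
  | succ j ih =>
      intro h
      show (∑ a, sch h a * ∑ s', P h.2 a s' * Fval P sch q t c f k j ((h.2, a) :: h.1, s'))
          + phi (q * t) (k - j) * f h.2 + psi (q * t) (k - j) * (c h.2 / q) ≤ _
      show _ ≤ sSup {x : ℝ | ∃ a, Enabled P h.2 a ∧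
            x = ∑ s', P h.2 a s' * maxVI P q t c f k j s'}
          + phi (q * t) (k - j) * f h.2 + psi (q * t) (k - j) * (c h.2 / q)
      refine add_le_add_left (add_le_add_left ?_ _) _
      set X : A → ℝ := fun a => ∑ s', P h.2 a s' * maxVI P q t c f k j s' with hX
      have hsub : {x : ℝ | ∃ a, Enabled P h.2 a ∧ x = X a} ⊆ Set.range X := by
        rintro x ⟨a, _, rfl⟩; exact ⟨a, rfl⟩
      have hbdd : BddAbove {x : ℝ | ∃ a, Enabled P h.2 a ∧ x = X a} :=
        ((Set.finite_range X).subset hsub).bddAbove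
      have hXle : ∀ a, 0 < sch h a → X a ≤ sSup {x : ℝ | ∃ a, Enabled P h.2 a ∧ x = X a} :=
        fun a ha => le_csSup hbdd ⟨a, hs.2.2 h a ha, rfl⟩
      calc ∑ a, sch h a * ∑ s', P h.2 a s' * Fval P sch q t c f k j ((h.2, a) :: h.1, s')
          ≤ ∑ a, sch h a * X a := by
            refine Finset.sum_le_sum fun a _ => mul_le_mul_of_nonneg_left ?_ (hs.1 h a)
            exact Finset.sum_le_sum fun s' _ =>
              mul_le_mul_of_nonneg_left (ih ((h.2, a) :: h.1, s')) (hP.1 _ _ _)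
        _ ≤ ∑ a, sch h a * sSup {x : ℝ | ∃ a, Enabled P h.2 a ∧ x = X a} := by
            refine Finset.sum_le_sum fun a _ => ?_
            rcases (hs.1 h a).eq_or_lt with h0 | h0
            · rw [← h0]; simp
            · exact mul_le_mul_of_nonneg_left (hXle a h0) h0.le
        _ = sSup {x : ℝ | ∃ a, Enabled P h.2 a ∧ x = X a} := by
            rw [← Finset.sum_mul, hs.2.1 h, one_mul]

lemma fval_identity (P : S → A → S → ℝ) (sch : List (S × A) × S → A → ℝ)
    (s0 : S) (q t : ℝ) (c f : S → ℝ) (k : ℕ) :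
    ∀ j i0, i0 + j = k + 1 →
      ∑ s : S, ∑ l ∈ histsLen S A i0,
          hrHistProb P sch s0 i0 (l, s) * Fval P sch q t c f k j (l, s)
      = ∑ m ∈ Finset.range j, ∑ s : S,
          (∑ l ∈ histsLen S A (i0 + m), hrHistProb P sch s0 (i0 + m) (l, s))
          * (phi (q * t) (i0 + m) * f s + psi (q * t) (i0 + m) * (c s / q)) := by
  intro j
  induction j with
  | zero => intro i0 _; simp [Fval]
  | succ j ih =>
      intro i0 hi0
      have hkj : k - j = i0 := by omega
      have hF : ∀ (l : List (S × A)) (s : S), Fval P sch q t c f k (j + 1) (l, s)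
          = hrHistProb P sch s0 i0 (l, s) * 0  -- dummy
          + ((∑ a, sch (l, s) a * ∑ s', P s a s' * Fval P sch q t c f k j ((s, a) :: l, s'))
            + (phi (q * t) i0 * f s + psi (q * t) i0 * (c s / q))) := by
        intro l s
        show (∑ a, sch (l, s) a * ∑ s', P s a s' * Fval P sch q t c f k j ((s, a) :: l, s'))
            + phi (q * t) (k - j) * f s + psi (q * t) (k - j) * (c s / q) = _
        rw [hkj]; ring
      calc ∑ s : S, ∑ l ∈ histsLen S A i0,
              hrHistProb P sch s0 i0 (l, s) * Fval P sch q t c f k (j + 1) (l, s)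
          = (∑ s : S, ∑ l ∈ histsLen S A i0, hrHistProb P sch s0 i0 (l, s) *
                ∑ a, sch (l, s) a * ∑ s', P s a s' * Fval P sch q t c f k j ((s, a) :: l, s'))
            + ∑ s : S, ∑ l ∈ histsLen S A i0, hrHistProb P sch s0 i0 (l, s) *
                (phi (q * t) i0 * f s + psi (q * t) i0 * (c s / q)) := by
            rw [← Finset.sum_add_distrib]
            refine Finset.sum_congr rfl fun s _ => ?_
            rw [← Finset.sum_add_distrib]
            refine Finset.sum_congr rfl fun l _ => ?_
            rw [hF l s]; ring
        _ = (∑ m ∈ Finset.range j, ∑ s : S,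
              (∑ l ∈ histsLen S A (i0 + 1 + m), hrHistProb P sch s0 (i0 + 1 + m) (l, s))
              * (phi (q * t) (i0 + 1 + m) * f s + psi (q * t) (i0 + 1 + m) * (c s / q)))
            + ∑ s : S, (∑ l ∈ histsLen S A i0, hrHistProb P sch s0 i0 (l, s))
              * (phi (q * t) i0 * f s + psi (q * t) i0 * (c s / q)) := by
            congr 1
            · rw [← sum_hists_succ P sch s0 i0 (fun h => Fval P sch q t c f k j h)]
              exact ih (i0 + 1) (by omega)
            · exact Finset.sum_congr rfl fun s _ => (Finset.sum_mul _ _ _).symm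
        _ = ∑ m ∈ Finset.range (j + 1), ∑ s : S,
              (∑ l ∈ histsLen S A (i0 + m), hrHistProb P sch s0 (i0 + m) (l, s))
              * (phi (q * t) (i0 + m) * f s + psi (q * t) (i0 + m) * (c s / q)) := by
            rw [Finset.sum_range_succ']
            congr 1
            exact Finset.sum_congr rfl fun m _ => by
              rw [show i0 + (m + 1) = i0 + 1 + m from by omega]

lemma sum_base_hist (P : S → A → S → ℝ) (sch : List (S × A) × S → A → ℝ)
    (s0 : S) (g : List (S × A) × S → ℝ) :
    ∑ s : S, ∑ l ∈ histsLen S A 0, hrHistProb P sch s0 0 (l, s) * g (l, s) = g ([], s0) := by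
  rw [show histsLen S A 0 = {([] : List (S × A))} from rfl]
  simp only [Finset.sum_singleton]
  have h : ∀ s : S, hrHistProb P sch s0 0 ([], s) = if s = s0 then 1 else 0 := by
    intro s
    show (if ([] : List (S × A)) = [] ∧ s = s0 then (1 : ℝ) else 0) = _
    simp
  simp only [h, ite_mul, one_mul, zero_mul]
  rw [Finset.sum_ite_eq' Finset.univ s0 (fun s => g ([], s))]
  simp

lemma exists_max_action (P : S → A → S → ℝ) (hP : IsDTMDP P)
    (q t : ℝ) (c f : S → ℝ) (k : ℕ) (s : S) (j : ℕ) :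
    ∃ a, Enabled P s a ∧
      (∑ s', P s a s' * maxVI P q t c f k j s')
        = sSup {x : ℝ | ∃ a, Enabled P s a ∧ x = ∑ s', P s a s' * maxVI P q t c f k j s'} := by
  have hne : {x : ℝ | ∃ a, Enabled P s a ∧
      x = ∑ s', P s a s' * maxVI P q t c f k j s'}.Nonempty := by
    obtain ⟨a, ha⟩ := hP.2.2 s
    exact ⟨_, a, ha, rfl⟩
  have hfin : {x : ℝ | ∃ a, Enabled P s a ∧
      x = ∑ s', P s a s' * maxVI P q t c f k j s'}.Finite := by
    refine (Set.finite_range fun a => ∑ s', P s a s' * maxVI P q t c f k j s').subset ?_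
    rintro x ⟨a, _, rfl⟩; exact ⟨a, rfl⟩
  obtain ⟨a, ha, hx⟩ := hne.csSup_mem hfin
  exact ⟨a, ha, hx.symm⟩

lemma greedy_fval (P : S → A → S → ℝ) (q t : ℝ) (c f : S → ℝ) (k : ℕ)
    (aopt : S → ℕ → A)
    (hval : ∀ s j, (∑ s', P s (aopt s j) s' * maxVI P q t c f k j s')
        = sSup {x : ℝ | ∃ a, Enabled P s a ∧ x = ∑ s', P s a s' * maxVI P q t c f k j s'}) :
    ∀ j (h : List (S × A) × S), h.1.length + j = k + 1 →
      Fval P (fun h a => if a = aopt h.2 (k - h.1.length) then (1 : ℝ) else 0) q t c f k j h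
        = maxVI P q t c f k j h.2 := by
  intro j
  induction j with
  | zero => intro h _; simp [Fval, maxVI]
  | succ j ih =>
      intro h hlen
      have hjk : k - h.1.length = j := by omega
      show (∑ a, (if a = aopt h.2 (k - h.1.length) then (1 : ℝ) else 0)
            * ∑ s', P h.2 a s' * Fval _ _ q t c f k j ((h.2, a) :: h.1, s'))
          + phi (q * t) (k - j) * f h.2 + psi (q * t) (k - j) * (c h.2 / q)
        = sSup {x : ℝ | ∃ a, Enabled P h.2 a ∧
            x = ∑ s', P h.2 a s' * maxVI P q t c f k j s'}
          + phi (q * t) (k - j) * f h.2 + psi (q * t) (k - j) * (c h.2 / q)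
      congr 1
      congr 1
      rw [hjk]
      have hsum : ∀ Y : A → ℝ, ∑ a, (if a = aopt h.2 j then (1 : ℝ) else 0) * Y a
          = Y (aopt h.2 j) := by
        intro Y
        have h1 : ∀ a, (if a = aopt h.2 j then (1 : ℝ) else 0) * Y a
            = if a = aopt h.2 j then Y a else 0 := by
          intro a; split <;> simp
        simp only [h1]
        rw [Finset.sum_ite_eq' Finset.univ (aopt h.2 j) Y]
        simp
      rw [hsum]
      have hF : ∀ s', Fval P (fun h a => if a = aopt h.2 (k - h.1.length) then (1 : ℝ) else 0)
          q t c f k j ((h.2, aopt h.2 j) :: h.1, s') = maxVI P q t c f k j s' := by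
        intro s'
        exact ih ((h.2, aopt h.2 j) :: h.1, s') (by simp [List.length_cons]; omega)
      simp only [hF]
      exact hval h.2 j

set_option maxHeartbeats 1000000 in
lemma value_facts [Nonempty S] (P : S → A → S → ℝ) (hP : IsDTMDP P)
    (q t : ℝ) (hq : 0 < q) (ht : 0 ≤ t)
    (c f : S → ℝ) (hc : ∀ s, 0 ≤ c s) (hf : ∀ s, 0 ≤ f s) (k : ℕ)
    (sch : List (S × A) × S → A → ℝ) (hsch : IsHR P sch) (s0 : S) :
    (∑ i ∈ Finset.range (k + 1), ∑ s, hrProb P sch s0 i s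
        * (phi (q * t) i * f s + psi (q * t) i * (c s / q)))
      ≤ value q t c f (hrProb P sch s0)
    ∧ value q t c f (hrProb P sch s0)
      ≤ (∑ i ∈ Finset.range (k + 1), ∑ s, hrProb P sch s0 i s
          * (phi (q * t) i * f s + psi (q * t) i * (c s / q)))
        + (psi (q * t) k * maxOf f + (∑' n, psi (q * t) (n + (k + 1))) * (maxOf c / q)) := by
  have hlam : 0 ≤ q * t := mul_nonneg hq.le ht
  have hpn : ∀ i s, 0 ≤ hrProb P sch s0 i s := fun i s => by
    rw [hrProb_eq_sum]
    exact Finset.sum_nonneg fun l _ => hrHistProb_nonneg P sch hP.1 hsch.1 s0 i l s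
  have hpm : ∀ i, ∑ s, hrProb P sch s0 i s = 1 := fun i => by
    rw [← sum_hrHistProb P hP sch hsch s0 i]
    exact Finset.sum_congr rfl fun s _ => hrProb_eq_sum P sch s0 i s
  set term : ℕ → ℝ := fun i => phi (q * t) i * (∑ s, hrProb P sch s0 i s * f s)
      + psi (q * t) i * (∑ s, hrProb P sch s0 i s * (c s / q)) with hterm_def
  have hval : value q t c f (hrProb P sch s0) = ∑' i, term i := rfl
  have hfM : ∀ s, f s ≤ maxOf f := fun s => Finset.le_sup' f (Finset.mem_univ s)
  have hcM : ∀ s, c s ≤ maxOf c := fun s => Finset.le_sup' c (Finset.mem_univ s)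
  have hfM0 : 0 ≤ maxOf f := le_trans (hf _) (hfM (Classical.arbitrary S))
  have hcM0 : 0 ≤ maxOf c := le_trans (hc _) (hcM (Classical.arbitrary S))
  have hsf : ∀ i, 0 ≤ (∑ s, hrProb P sch s0 i s * f s)
      ∧ (∑ s, hrProb P sch s0 i s * f s) ≤ maxOf f := by
    intro i
    constructor
    · exact Finset.sum_nonneg fun s _ => mul_nonneg (hpn i s) (hf s)
    · calc ∑ s, hrProb P sch s0 i s * f s
          ≤ ∑ s, hrProb P sch s0 i s * maxOf f :=
            Finset.sum_le_sum fun s _ => mul_le_mul_of_nonneg_left (hfM s) (hpn i s)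
        _ = maxOf f := by rw [← Finset.sum_mul, hpm i, one_mul]
  have hsc : ∀ i, 0 ≤ (∑ s, hrProb P sch s0 i s * (c s / q))
      ∧ (∑ s, hrProb P sch s0 i s * (c s / q)) ≤ maxOf c / q := by
    intro i
    constructor
    · exact Finset.sum_nonneg fun s _ => mul_nonneg (hpn i s) (div_nonneg (hc s) hq.le)
    · calc ∑ s, hrProb P sch s0 i s * (c s / q)
          ≤ ∑ s, hrProb P sch s0 i s * (maxOf c / q) :=
            Finset.sum_le_sum fun s _ => mul_le_mul_of_nonneg_left
              (div_le_div_of_nonneg_right (hcM s) hq.le) (hpn i s)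
        _ = maxOf c / q := by rw [← Finset.sum_mul, hpm i, one_mul]
  have hterm_nonneg : ∀ i, 0 ≤ term i := fun i =>
    add_nonneg (mul_nonneg (phi_nonneg hlam i) (hsf i).1)
      (mul_nonneg (psi_nonneg hlam i) (hsc i).1)
  have hterm_le : ∀ i, term i ≤ phi (q * t) i * maxOf f + psi (q * t) i * (maxOf c / q) :=
    fun i => add_le_add (mul_le_mul_of_nonneg_left (hsf i).2 (phi_nonneg hlam i))
      (mul_le_mul_of_nonneg_left (hsc i).2 (psi_nonneg hlam i))
  have hb_sum : Summable (fun i => phi (q * t) i * maxOf f + psi (q * t) i * (maxOf c / q)) :=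
    ((summable_phi _).mul_right _).add ((summable_psi hlam).mul_right _)
  have hts : Summable term := Summable.of_nonneg_of_le hterm_nonneg hterm_le hb_sum
  have hsplit : ∑ i ∈ Finset.range (k + 1), term i + ∑' n, term (n + (k + 1)) = ∑' i, term i :=
    Summable.sum_add_tsum_nat_add (k + 1) hts
  have htail0 : 0 ≤ ∑' n, term (n + (k + 1)) := tsum_nonneg fun n => hterm_nonneg _
  have htail : ∑' n, term (n + (k + 1))
      ≤ psi (q * t) k * maxOf f + (∑' n, psi (q * t) (n + (k + 1))) * (maxOf c / q) := by
    have h1 : ∑' n, term (n + (k + 1))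
        ≤ ∑' n, (phi (q * t) (n + (k + 1)) * maxOf f + psi (q * t) (n + (k + 1)) * (maxOf c / q)) :=
      Summable.tsum_le_tsum (fun n => hterm_le _) ((summable_nat_add_iff (k + 1)).2 hts)
        ((summable_nat_add_iff (k + 1)).2 hb_sum)
    have h2 : ∑' n, (phi (q * t) (n + (k + 1)) * maxOf f
          + psi (q * t) (n + (k + 1)) * (maxOf c / q))
        = (∑' n, phi (q * t) (n + (k + 1))) * maxOf f
          + (∑' n, psi (q * t) (n + (k + 1))) * (maxOf c / q) := by
      rw [Summable.tsum_add ((summable_psi_shift _ k).mul_right _)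
        (((summable_nat_add_iff (k + 1)).2 (summable_psi hlam)).mul_right _),
        tsum_mul_right, tsum_mul_right]
    rw [h2, ← psi_eq_tsum] at h1
    exact h1
  have hterm_eq : ∀ i, term i = ∑ s, hrProb P sch s0 i s
      * (phi (q * t) i * f s + psi (q * t) i * (c s / q)) := by
    intro i
    rw [hterm_def]
    simp only []
    rw [Finset.mul_sum, Finset.mul_sum, ← Finset.sum_add_distrib]
    exact Finset.sum_congr rfl fun s _ => by ring
  have hVT : ∑ i ∈ Finset.range (k + 1), ∑ s, hrProb P sch s0 i s
      * (phi (q * t) i * f s + psi (q * t) i * (c s / q))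
      = ∑ i ∈ Finset.range (k + 1), term i :=
    (Finset.sum_congr rfl fun i _ => (hterm_eq i).symm)
  constructor
  · rw [hval, hVT, ← hsplit]; linarith
  · rw [hval, hVT, ← hsplit]; linarith

lemma VT_eq_fval [Nonempty S] (P : S → A → S → ℝ) (sch : List (S × A) × S → A → ℝ)
    (s0 : S) (q t : ℝ) (c f : S → ℝ) (k : ℕ) :
    ∑ i ∈ Finset.range (k + 1), ∑ s, hrProb P sch s0 i s
        * (phi (q * t) i * f s + psi (q * t) i * (c s / q))
      = Fval P sch q t c f k (k + 1) ([], s0) := by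
  have h := fval_identity P sch s0 q t c f k (k + 1) 0 (by omega)
  rw [sum_base_hist P sch s0 (fun h => Fval P sch q t c f k (k + 1) h)] at h
  simp only [zero_add] at h
  have h2 : ∑ i ∈ Finset.range (k + 1), ∑ s, hrProb P sch s0 i s
        * (phi (q * t) i * f s + psi (q * t) i * (c s / q))
      = ∑ i ∈ Finset.range (k + 1), ∑ s,
          (∑ l ∈ histsLen S A i, hrHistProb P sch s0 i (l, s))
          * (phi (q * t) i * f s + psi (q * t) i * (c s / q)) :=
    Finset.sum_congr rfl fun i _ => Finset.sum_congr rfl fun s _ => by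
      rw [hrProb_eq_sum]
  rw [h2]
  exact h.symm

end MDPAux


/-- for an ε-sufficient `k`, the maximising value-iteration vector
`q'_0` is within `ε` of the supremum of the value over HR schedulers. -/
theorem stmt1 {S A : Type} [Fintype S] [Nonempty S] [Fintype A]
    [DecidableEq S] [DecidableEq A]
    (P : S → A → S → ℝ) (hP : IsDTMDP P)
    (q t : ℝ) (hq : 0 < q) (ht : 0 ≤ t)
    (c f : S → ℝ) (hc : ∀ s, 0 ≤ c s) (hf : ∀ s, 0 ≤ f s)
    (ε : ℝ) (hε : 0 < ε) (k : ℕ) (hk : EpsSufficient q t c f ε k) :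
    ∀ s0 : S,
      |maxVI P q t c f k (k + 1) s0 -
        ⨆ sch : {sch : List (S × A) × S → A → ℝ // IsHR P sch},
          value q t c f (hrProb P sch.1 s0)| < ε := by
  intro s0
  have hlam : 0 ≤ q * t := mul_nonneg hq.le ht
  have hfM : ∀ s, f s ≤ maxOf f := fun s => Finset.le_sup' f (Finset.mem_univ s)
  have hcM : ∀ s, c s ≤ maxOf c := fun s => Finset.le_sup' c (Finset.mem_univ s)
  have hfM0 : 0 ≤ maxOf f := le_trans (hf _) (hfM (Classical.arbitrary S))
  have hcM0 : 0 ≤ maxOf c := le_trans (hc _) (hcM (Classical.arbitrary S))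
  -- the tail bound B
  set B : ℝ := psi (q * t) k * maxOf f + (∑' n, psi (q * t) (n + (k + 1))) * (maxOf c / q)
    with hB_def
  -- B < ε
  have hTψ0 : 0 ≤ ∑' n, psi (q * t) (n + (k + 1)) :=
    tsum_nonneg fun n => psi_nonneg hlam _
  have hψsplit : ∑ n ∈ Finset.range (k + 1), psi (q * t) n
      + ∑' n, psi (q * t) (n + (k + 1)) = ∑' n, psi (q * t) n :=
    Summable.sum_add_tsum_nat_add (k + 1) (summable_psi hlam)
  have hψle : ∑' n, psi (q * t) n ≤ q * t := tsum_psi_le hlam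
  have hψrange : ∑ n ∈ Finset.range (k + 1), psi (q * t) n ≤ q * t :=
    sum_range_psi_le hlam (k + 1)
  have hB2 : (∑' n, psi (q * t) (n + (k + 1))) * (maxOf c / q) < ε / 2 := by
    rcases hk.1 with h0 | h1
    · rw [h0]
      simp only [zero_div, mul_zero]
      positivity
    · have hMc : 0 < maxOf c := by
        rcases hcM0.eq_or_lt with h | h
        · exfalso
          rw [← h] at h1
          simp only [mul_zero, div_zero] at h1
          linarith
        · exact h
      have hTψlt : ∑' n, psi (q * t) (n + (k + 1)) < ε * q / (2 * maxOf c) := by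
        linarith
      have hpos : 0 < maxOf c / q := div_pos hMc hq
      calc (∑' n, psi (q * t) (n + (k + 1))) * (maxOf c / q)
          < (ε * q / (2 * maxOf c)) * (maxOf c / q) := by
            exact mul_lt_mul_of_pos_right hTψlt hpos
        _ = ε / 2 := by field_simp
  have hBlt : B < ε := by
    have := hk.2
    rw [hB_def]
    linarith
  -- upper bound for every scheduler
  have hupper : ∀ sch : {sch : List (S × A) × S → A → ℝ // IsHR P sch},
      value q t c f (hrProb P sch.1 s0) ≤ maxVI P q t c f k (k + 1) s0 + B := by
    rintro ⟨sch, hsch⟩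
    have hvf := (value_facts P hP q t hq ht c f hc hf k sch hsch s0).2
    have hVT := VT_eq_fval P sch s0 q t c f k
    have hle := Fval_le_maxVI P hP sch hsch q t c f k (k + 1) ([], s0)
    simp only at hle
    calc value q t c f (hrProb P sch s0)
        ≤ (∑ i ∈ Finset.range (k + 1), ∑ s, hrProb P sch s0 i s
            * (phi (q * t) i * f s + psi (q * t) i * (c s / q))) + B := hvf
      _ ≤ maxVI P q t c f k (k + 1) s0 + B := by
          rw [hVT]
          exact add_le_add_left hle B
  -- the greedy scheduler
  have hex := exists_max_action P hP q t c f k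
  choose aopt hen hval using hex
  set schg : List (S × A) × S → A → ℝ :=
    fun h a => if a = aopt h.2 (k - h.1.length) then 1 else 0 with hschg_def
  have hgr : IsHR P schg := by
    refine ⟨fun h a => ?_, fun h => ?_, fun h a ha => ?_⟩
    · rw [hschg_def]; dsimp only; split <;> norm_num
    · rw [hschg_def]; dsimp only
      rw [Finset.sum_ite_eq' Finset.univ (aopt h.2 (k - h.1.length)) (fun _ => (1 : ℝ))]
      simp
    · rw [hschg_def] at ha; dsimp only at ha
      by_cases h' : a = aopt h.2 (k - h.1.length)
      · rw [h']; exact hen h.2 (k - h.1.length)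
      · simp [h'] at ha
  have hgVT : Fval P schg q t c f k (k + 1) ([], s0) = maxVI P q t c f k (k + 1) s0 := by
    have := greedy_fval P q t c f k aopt hval (k + 1) ([], s0) (by simp)
    exact this
  have hlower : maxVI P q t c f k (k + 1) s0 ≤ value q t c f (hrProb P schg s0) := by
    have hvf := (value_facts P hP q t hq ht c f hc hf k schg hgr s0).1
    have hVT := VT_eq_fval P schg s0 q t c f k
    rw [hVT, hgVT] at hvf
    exact hvf
  -- the supremum
  have hne : Nonempty {sch : List (S × A) × S → A → ℝ // IsHR P sch} := ⟨⟨schg, hgr⟩⟩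
  have hbddV : BddAbove (Set.range fun sch : {sch : List (S × A) × S → A → ℝ // IsHR P sch} =>
      value q t c f (hrProb P sch.1 s0)) := by
    refine ⟨maxVI P q t c f k (k + 1) s0 + B, ?_⟩
    rintro x ⟨sch, rfl⟩
    exact hupper sch
  have hSup1 : maxVI P q t c f k (k + 1) s0
      ≤ ⨆ sch : {sch : List (S × A) × S → A → ℝ // IsHR P sch},
          value q t c f (hrProb P sch.1 s0) :=
    le_trans hlower (le_ciSup hbddV ⟨schg, hgr⟩)
  have hSup2 : (⨆ sch : {sch : List (S × A) × S → A → ℝ // IsHR P sch},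
        value q t c f (hrProb P sch.1 s0))
      ≤ maxVI P q t c f k (k + 1) s0 + B :=
    ciSup_le hupper
  rw [abs_sub_lt_iff]
  constructor <;> linarith


end TR
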